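/- arXiv:1901.07105 — 3 statements merged into one kernel-verified Lean document; each statement's English description precedes it below -/
import Mathlib

section
/- As α → 1, the Arimoto conditional entropy H_α(X|Y) = (α/(1−α)) log ∑_y (∑_x P_{XY}(x,y)^α)^{1/α} converges to the Shannon conditional entropy H(X|Y). -/
open Finset Real Filter Topology

/-- As `α → 1`, the Arimoto conditional entropy converges to Shannon conditional entropy. -/
theorem arimoto_cond_entropy_tendsto_shannon {X Y : Type*} [Fintype X] [Fintype Y]
    (P : X → Y → ℝ)
    (hPpos : ∀ x y, 0 < P x y) (hPsum : ∑ x, ∑ y, P x y = 1) :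
    Tendsto
      (fun α : ℝ => (α / (1 - α)) *
        Real.log (∑ y, (∑ x, P x y ^ α) ^ (1/α)))
      (𝓝[≠] (1 : ℝ))
      (𝓝 (- ∑ x, ∑ y, P x y * Real.log (P x y / (∑ x', P x' y)))) := by
  have hXne : Nonempty X := by
    by_contra h
    rw [not_nonempty_iff] at h
    simp at hPsum
  have hYne : Nonempty Y := by
    by_contra h
    rw [not_nonempty_iff] at h
    simp at hPsum
  set PY : Y → ℝ := fun y => ∑ x', P x' y with hPYdef
  have hPYpos : ∀ y, 0 < PY y := fun y =>
    Finset.sum_pos (fun x _ => hPpos x y) Finset.univ_nonempty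
  set S : Y → ℝ → ℝ := fun y α => ∑ x, P x y ^ α with hSdef
  have hSpos : ∀ y α, 0 < S y α := fun y α =>
    Finset.sum_pos (fun x _ => Real.rpow_pos_of_pos (hPpos x y) α) Finset.univ_nonempty
  have hS1 : ∀ y, S y 1 = PY y := by
    intro y; simp [hSdef, Real.rpow_one, hPYdef]
  have hSderiv : ∀ y, HasDerivAt (fun α => S y α) (∑ x, P x y * Real.log (P x y)) 1 := by
    intro y
    have h : ∀ x, HasDerivAt (fun α : ℝ => P x y ^ α) (P x y * Real.log (P x y)) 1 := by
      intro x
      have h := (Real.hasStrictDerivAt_const_rpow (hPpos x y) 1).hasDerivAt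
      simpa [Real.rpow_one] using h
    simpa [hSdef] using HasDerivAt.fun_sum (fun x _ => h x)
  set D : ℝ := ∑ y, ((∑ x, P x y * Real.log (P x y)) - PY y * Real.log (PY y)) with hDdef
  have hHderiv : ∀ y, HasDerivAt (fun α => S y α ^ (1/α))
      ((∑ x, P x y * Real.log (P x y)) - PY y * Real.log (PY y)) 1 := by
    intro y
    have heq : (fun α => S y α ^ (1/α)) = fun α => Real.exp ((1/α) * Real.log (S y α)) := by
      funext α
      rw [Real.rpow_def_of_pos (hSpos y α), mul_comm]
    rw [heq]
    have h1 : HasDerivAt (fun α : ℝ => 1/α) (-1) 1 := by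
      simpa [one_div] using hasDerivAt_inv (one_ne_zero (α := ℝ))
    have h2 : HasDerivAt (fun α => Real.log (S y α))
        ((∑ x, P x y * Real.log (P x y)) / S y 1) 1 := (hSderiv y).log (hSpos y 1).ne'
    have hu : HasDerivAt (fun α => 1/α * Real.log (S y α)) _ 1 := h1.mul h2
    have hexp := hu.exp
    convert hexp using 1
    · rw [hS1 y]
      have h3 : Real.exp ((1/(1:ℝ)) * Real.log (PY y)) = PY y := by
        rw [one_div_one, one_mul, Real.exp_log (hPYpos y)]
      rw [h3]
      field_simp [(hPYpos y).ne']
      ring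
  set g : ℝ → ℝ := fun α => ∑ y, S y α ^ (1/α) with hgdef
  have hg1 : g 1 = 1 := by
    have : g 1 = ∑ y, PY y := by
      apply Finset.sum_congr rfl
      intro y _
      rw [hS1 y]
      norm_num
    rw [this, hPYdef, ← Finset.sum_comm, hPsum]
  have hG : HasDerivAt g D 1 := by
    rw [hDdef]
    exact HasDerivAt.fun_sum (fun y _ => hHderiv y)
  have hF : HasDerivAt (fun α => Real.log (g α)) (D / g 1) 1 := hG.log (by rw [hg1]; exact one_ne_zero)
  rw [hg1] at hF
  have hslope := hasDerivAt_iff_tendsto_slope.mp hF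
  have hneg : Tendsto (fun α : ℝ => -α) (𝓝[≠] (1:ℝ)) (𝓝 (-1)) :=
    (continuous_neg.tendsto 1).mono_left nhdsWithin_le_nhds
  have hmul := hneg.mul hslope
  have hDval : D = ∑ x, ∑ y, P x y * Real.log (P x y / PY y) := by
    rw [hDdef, Finset.sum_comm]
    apply Finset.sum_congr rfl
    intro y _
    have : ∀ x, P x y * Real.log (P x y / PY y)
        = P x y * Real.log (P x y) - P x y * Real.log (PY y) := by
      intro x
      rw [Real.log_div (hPpos x y).ne' (hPYpos y).ne', mul_sub]
    rw [Finset.sum_congr rfl (fun x _ => this x), Finset.sum_sub_distrib, ← Finset.sum_mul]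
  have hfinal : (-1 : ℝ) * (D / 1) = - ∑ x, ∑ y, P x y * Real.log (P x y / PY y) := by
    rw [hDval]; ring
  rw [← hfinal]
  apply hmul.congr'
  filter_upwards [self_mem_nhdsWithin] with α hα
  have hα1 : α - 1 ≠ 0 := sub_ne_zero.mpr hα
  have : Real.log (g 1) = 0 := by rw [hg1, Real.log_one]
  simp only [slope_def_field, div_sub_div_same]
  rw [this]
  show -α * ((Real.log (g α) - 0) / (α - 1)) = α / (1 - α) * Real.log (g α)
  have h2α : (1:ℝ) - α ≠ 0 := sub_ne_zero.mpr (Ne.symm hα)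
  field_simp
  ring
end

section
/- For α > 1 and any fixed channel P_{Y|X} on finite alphabets, the supremum over input distributions P_X of the Sibson mutual information I_α^S(X;Y) equals the supremum over input distributions of the Arimoto mutual information I_α^A(X;Y). -/
open Finset Real

lemma exists_pos_of_sum_one {X : Type*} [Fintype X] (p : X → ℝ)
    (hsum : ∑ x, p x = 1) : ∃ x, 0 < p x := by
  by_contra h
  push_neg at h
  have : (∑ x, p x) ≤ 0 := Finset.sum_nonpos (fun x _ => h x)
  linarith

/-- For `α > 1` and a fixed channel, the supremum over input pmfs of the Sibson
mutual information equals the supremum over input pmfs of the Arimoto mutual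
information. -/
theorem sup_sibson_eq_sup_arimoto {X Y : Type*} [Fintype X] [Fintype Y] [Nonempty X]
    (α : ℝ) (hα : 1 < α)
    (W : X → Y → ℝ) (hWnn : ∀ x y, 0 ≤ W x y) (hWsum : ∀ x, ∑ y, W x y = 1) :
    sSup {r : ℝ | ∃ p : X → ℝ, (∀ x, 0 ≤ p x) ∧ (∑ x, p x = 1) ∧
        r = (α / (α - 1)) * Real.log (∑ y, (∑ x, p x * W x y ^ α) ^ (1/α))}
    = sSup {r : ℝ | ∃ p : X → ℝ, (∀ x, 0 ≤ p x) ∧ (∑ x, p x = 1) ∧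
        r = (α / (α - 1)) *
          Real.log (∑ y, ((∑ x, p x ^ α * W x y ^ α) / (∑ x', p x' ^ α)) ^ (1/α))} := by
  have hα0 : (0:ℝ) < α := by linarith
  congr 1
  ext r
  constructor
  · -- Sibson value → Arimoto value via q = p^{1/α} / T
    rintro ⟨p, hp, hsum, rfl⟩
    set T : ℝ := ∑ x, p x ^ (1/α) with hTdef
    obtain ⟨x₀, hx₀⟩ := exists_pos_of_sum_one p hsum
    have hT0 : 0 < T :=
      Finset.sum_pos' (fun x _ => Real.rpow_nonneg (hp x) _)
        ⟨x₀, Finset.mem_univ _, Real.rpow_pos_of_pos hx₀ _⟩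
    have hTα : (0:ℝ) < T ^ α := Real.rpow_pos_of_pos hT0 _
    refine ⟨fun x => p x ^ (1/α) / T,
      fun x => div_nonneg (Real.rpow_nonneg (hp x) _) hT0.le, ?_, ?_⟩
    · rw [← Finset.sum_div, ← hTdef, div_self hT0.ne']
    have hq : ∀ x, (p x ^ (1/α) / T) ^ α = p x / T ^ α := by
      intro x
      rw [Real.div_rpow (Real.rpow_nonneg (hp x) _) hT0.le,
        ← Real.rpow_mul (hp x), one_div_mul_cancel hα0.ne', Real.rpow_one]
    congr 2
    apply Finset.sum_congr rfl
    intro y _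
    congr 1
    have h1 : ∑ x, (p x ^ (1/α) / T) ^ α * W x y ^ α
        = (∑ x, p x * W x y ^ α) / T ^ α := by
      rw [Finset.sum_div]
      exact Finset.sum_congr rfl fun x _ => by rw [hq x, div_mul_eq_mul_div]
    have h2 : ∑ x', (p x' ^ (1/α) / T) ^ α = 1 / T ^ α := by
      rw [Finset.sum_congr rfl fun x _ => hq x, ← Finset.sum_div, hsum]
    rw [h1, h2]
    field_simp
  · -- Arimoto value → Sibson value via q = p^α / S
    rintro ⟨p, hp, hsum, rfl⟩
    set S : ℝ := ∑ x, p x ^ α with hSdef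
    obtain ⟨x₀, hx₀⟩ := exists_pos_of_sum_one p hsum
    have hS0 : 0 < S :=
      Finset.sum_pos' (fun x _ => Real.rpow_nonneg (hp x) _)
        ⟨x₀, Finset.mem_univ _, Real.rpow_pos_of_pos hx₀ _⟩
    refine ⟨fun x => p x ^ α / S,
      fun x => div_nonneg (Real.rpow_nonneg (hp x) _) hS0.le, ?_, ?_⟩
    · rw [← Finset.sum_div, ← hSdef, div_self hS0.ne']
    congr 2
    apply Finset.sum_congr rfl
    intro y _
    congr 1
    rw [Finset.sum_div]
    exact (Finset.sum_congr rfl fun x _ => (div_mul_eq_mul_div _ _ _)).symm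
end

section
/- For α > 1, the Sibson mutual information satisfies the data processing inequality on the input: if U − X − Y forms a Markov chain on finite alphabets, then I_α^S(U;Y) ≤ I_α^S(X;Y). -/
open Finset Real

/-- Data processing inequality on the input for Sibson mutual information:
if `U − X − Y` is a Markov chain then `I_α^S(U;Y) ≤ I_α^S(X;Y)` for `α > 1`. -/
theorem sibson_data_processing {U X Y : Type*} [Fintype U] [Fintype X] [Fintype Y]
    (α : ℝ) (hα : 1 < α)
    (PU : U → ℝ) (PXU : U → X → ℝ) (W : X → Y → ℝ)
    (hPUnn : ∀ u, 0 ≤ PU u) (hPUsum : ∑ u, PU u = 1)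
    (hPXUnn : ∀ u x, 0 ≤ PXU u x) (hPXUsum : ∀ u, ∑ x, PXU u x = 1)
    (hWnn : ∀ x y, 0 ≤ W x y) (hWsum : ∀ x, ∑ y, W x y = 1) :
    (α / (α - 1)) *
        Real.log (∑ y, (∑ u, PU u * (∑ x, PXU u x * W x y) ^ α) ^ (1/α))
    ≤ (α / (α - 1)) *
        Real.log (∑ y, (∑ x, (∑ u, PU u * PXU u x) * W x y ^ α) ^ (1/α)) := by
  have hα0 : (0:ℝ) < α := lt_trans one_pos hα
  have hcoef : 0 ≤ α / (α - 1) := le_of_lt (div_pos hα0 (by linarith))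
  -- inner Jensen inequality
  have hinner : ∀ y, (∑ u, PU u * (∑ x, PXU u x * W x y) ^ α)
      ≤ ∑ x, (∑ u, PU u * PXU u x) * W x y ^ α := by
    intro y
    calc ∑ u, PU u * (∑ x, PXU u x * W x y) ^ α
        ≤ ∑ u, PU u * (∑ x, PXU u x * W x y ^ α) := by
          apply Finset.sum_le_sum
          intro u _
          apply mul_le_mul_of_nonneg_left _ (hPUnn u)
          exact Real.rpow_arith_mean_le_arith_mean_rpow univ (PXU u) (fun x => W x y)
            (fun x _ => hPXUnn u x) (by simpa using hPXUsum u)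
            (fun x _ => hWnn x y) hα.le
      _ = ∑ x, (∑ u, PU u * PXU u x) * W x y ^ α := by
          simp_rw [Finset.mul_sum, Finset.sum_mul, mul_assoc]
          exact Finset.sum_comm
  have htermnn : ∀ y, 0 ≤ ∑ u, PU u * (∑ x, PXU u x * W x y) ^ α := by
    intro y
    apply Finset.sum_nonneg
    intro u _
    exact mul_nonneg (hPUnn u) (Real.rpow_nonneg
      (Finset.sum_nonneg fun x _ => mul_nonneg (hPXUnn u x) (hWnn x y)) _)
  -- sums comparison
  have hsums : (∑ y, (∑ u, PU u * (∑ x, PXU u x * W x y) ^ α) ^ (1/α))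
      ≤ ∑ y, (∑ x, (∑ u, PU u * PXU u x) * W x y ^ α) ^ (1/α) := by
    apply Finset.sum_le_sum
    intro y _
    exact Real.rpow_le_rpow (htermnn y) (hinner y) (by positivity)
  -- positivity of LHS sum
  have hpos : 0 < ∑ y, (∑ u, PU u * (∑ x, PXU u x * W x y) ^ α) ^ (1/α) := by
    obtain ⟨u0, _, hu0⟩ : ∃ u ∈ (univ : Finset U), 0 < PU u := by
      by_contra h
      push_neg at h
      have : (∑ u, PU u) ≤ 0 := Finset.sum_nonpos fun u hu => h u hu
      rw [hPUsum] at this; linarith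
    have hqy : ∃ y, 0 < ∑ x, PXU u0 x * W x y := by
      by_contra h
      push_neg at h
      have h1 : (∑ y, ∑ x, PXU u0 x * W x y) ≤ 0 :=
        Finset.sum_nonpos fun y _ => h y
      have h2 : (∑ y, ∑ x, PXU u0 x * W x y) = 1 := by
        rw [Finset.sum_comm]
        simp_rw [← Finset.mul_sum, hWsum, mul_one]
        exact hPXUsum u0
      linarith
    obtain ⟨y0, hy0⟩ := hqy
    have hterm : 0 < (∑ u, PU u * (∑ x, PXU u x * W x y0) ^ α) ^ (1/α) := by
      apply Real.rpow_pos_of_pos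
      have : 0 < PU u0 * (∑ x, PXU u0 x * W x y0) ^ α :=
        mul_pos hu0 (Real.rpow_pos_of_pos hy0 α)
      calc (0:ℝ) < PU u0 * (∑ x, PXU u0 x * W x y0) ^ α := this
        _ ≤ ∑ u, PU u * (∑ x, PXU u x * W x y0) ^ α := by
            apply Finset.single_le_sum (f := fun u => PU u * (∑ x, PXU u x * W x y0) ^ α)
            · intro u _
              exact mul_nonneg (hPUnn u) (Real.rpow_nonneg
                (Finset.sum_nonneg fun x _ => mul_nonneg (hPXUnn u x) (hWnn x y0)) _)
            · exact Finset.mem_univ u0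
    calc (0:ℝ) < (∑ u, PU u * (∑ x, PXU u x * W x y0) ^ α) ^ (1/α) := hterm
      _ ≤ _ := by
          apply Finset.single_le_sum
            (f := fun y => (∑ u, PU u * (∑ x, PXU u x * W x y) ^ α) ^ (1/α))
          · intro y _
            exact Real.rpow_nonneg (htermnn y) _
          · exact Finset.mem_univ y0
  exact mul_le_mul_of_nonneg_left (Real.log_le_log hpos hsums) hcoef
end
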